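/- Let θ = (θ₁,…,θₙ) ∈ ℝⁿ be such that 1, θ₁, …, θₙ are linearly independent over ℤ, and let m₀ be a best approximation to θ (with respect to the weights j₁,…,jₙ). Then the set {m ∈ ℤⁿ : m is a best approximation to θ and M_{m₀} ≤ M_m < 2·M_{m₀}} has at most 4·3ⁿ elements. -/

import Mathlib

open scoped BigOperators

/-- Distance from a real number to the nearest integer. -/
noncomputable def nearInt (x : ℝ) : ℝ := |x - round x|

/-- The height `M_m = max_i |m_i|^(1/j_i)` of an integer vector. -/
noncomputable def height (n : ℕ) (j : Fin n → ℝ) (m : Fin n → ℤ) : ℝ :=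
  ⨆ i, (|m i| : ℝ) ^ (1 / j i)

/-- `m ∈ ℤⁿ \ {0}` is a best approximation to `θ` with respect to the weights `j`. -/
def IsBestApprox (n : ℕ) (j θ : Fin n → ℝ) (m : Fin n → ℤ) : Prop :=
  m ≠ 0 ∧ ∀ v : Fin n → ℤ, v ≠ 0 → v ≠ m → v ≠ -m →
    height n j v ≤ height n j m →
    nearInt (∑ i, (m i : ℝ) * θ i) < nearInt (∑ i, (v i : ℝ) * θ i)

/-- `1, θ₁, …, θₙ` are linearly independent over `ℤ`. -/
def ZLinIndep (n : ℕ) (θ : Fin n → ℝ) : Prop :=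
  ∀ (a₀ : ℤ) (a : Fin n → ℤ), (a₀ : ℝ) + ∑ i, (a i : ℝ) * θ i = 0 → a₀ = 0 ∧ a = 0

/-! ### Auxiliary lemmas -/

lemma nearInt_le (x : ℝ) (k : ℤ) : nearInt x ≤ |x - k| := by
  unfold nearInt
  rcases eq_or_ne k (round x) with h | h
  · rw [h]
  · have h1 : (1 : ℝ) ≤ |(k : ℝ) - (round x : ℝ)| := by
      have h0 : k - round x ≠ 0 := sub_ne_zero.mpr h
      have := Int.one_le_abs h0
      calc (1 : ℝ) ≤ ((|k - round x| : ℤ) : ℝ) := by exact_mod_cast this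
        _ = |(k : ℝ) - (round x : ℝ)| := by push_cast; ring_nf
    have h2 := abs_sub_round x
    have h3 : |(k : ℝ) - (round x : ℝ)| ≤ |x - round x| + |x - k| := by
      calc |(k : ℝ) - (round x : ℝ)| = |(x - round x) - (x - k)| := by ring_nf
        _ ≤ |x - round x| + |x - k| := abs_sub _ _
    linarith

lemma round_neg_of {x : ℝ} (h : |x - round x| < 1/2) : round (-x) = -round x := by
  have h2 : -x = (-(x - (round x : ℝ))) + ((-round x : ℤ) : ℝ) := by push_cast; ring
  rw [h2, round_add_intCast]
  have h3 : round (-(x - (round x : ℝ))) = 0 := by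
    rw [round_eq_zero_iff, Set.mem_Ico]
    rcases abs_lt.mp h with ⟨ha, hb⟩
    constructor <;> linarith
  rw [h3]; ring

lemma le_height' (n : ℕ) (j : Fin n → ℝ) (m : Fin n → ℤ) (i : Fin n) :
    (|m i| : ℝ) ^ (1 / j i) ≤ height n j m := by
  unfold height
  exact le_ciSup (Set.Finite.bddAbove (Set.finite_range fun i => (|m i| : ℝ) ^ (1 / j i))) i

lemma height_le' (n : ℕ) [Nonempty (Fin n)] (j : Fin n → ℝ) (hj : ∀ i, 0 < j i)
    (m : Fin n → ℤ) (B : ℝ) (hB : 0 ≤ B) (h : ∀ i, (|m i| : ℝ) ≤ B ^ (j i)) :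
    height n j m ≤ B := by
  apply ciSup_le
  intro i
  rw [show (1:ℝ) / j i = (j i)⁻¹ from one_div _]
  calc (|m i| : ℝ) ^ (j i)⁻¹ ≤ (B ^ (j i)) ^ (j i)⁻¹ :=
        Real.rpow_le_rpow (by positivity) (h i) (inv_nonneg.mpr (hj i).le)
    _ = B := Real.rpow_rpow_inv hB (hj i).ne'

lemma coord_lt (n : ℕ) (j : Fin n → ℝ) (hj : ∀ i, 0 < j i) (m : Fin n → ℤ) (R : ℝ)
    (i : Fin n) (h : height n j m < R) : (|m i| : ℝ) < R ^ (j i) := by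
  have h1 : (|m i| : ℝ) ^ (1 / j i) < R := lt_of_le_of_lt (le_height' n j m i) h
  have h0 : (0 : ℝ) ≤ (|m i| : ℝ) ^ (1 / j i) := by positivity
  have h2 := Real.rpow_lt_rpow h0 h1 (hj i)
  have h3 : ((|m i| : ℝ) ^ ((j i)⁻¹)) ^ (j i) = (|m i| : ℝ) :=
    Real.rpow_inv_rpow (by positivity) (hj i).ne'
  rw [one_div] at h2
  rwa [h3] at h2

/-- Index of the third of `(-r, r)` that `x` lies in. -/
noncomputable def thirdIdx (r x : ℝ) : Fin 3 :=
  open Classical in if x < -(r/3) then 0 else if x ≤ r/3 then 1 else 2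

lemma thirdIdx_dist {r x y : ℝ} (hx : |x| < r) (hy : |y| < r)
    (h : thirdIdx r x = thirdIdx r y) : |x - y| ≤ 2/3 * r := by
  unfold thirdIdx at h
  rcases abs_lt.mp hx with ⟨hx1, hx2⟩
  rcases abs_lt.mp hy with ⟨hy1, hy2⟩
  rw [abs_le]
  split_ifs at h <;>
    first
      | (exact absurd h (by decide))
      | (constructor <;> linarith)

/-- The classifying function: sign of signed distance, height bucket, and
    coordinatewise thirds. -/
noncomputable def classFn (n : ℕ) (j θ : Fin n → ℝ) (M₀ : ℝ) (m : Fin n → ℤ) :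
    Prop × Prop × (Fin n → Fin 3) :=
  (0 < (∑ i, (m i : ℝ) * θ i) - round (∑ i, (m i : ℝ) * θ i),
   height n j m < 3/2 * M₀,
   fun i => thirdIdx
     ((open Classical in if height n j m < 3/2 * M₀ then 3/2 * M₀ else 2 * M₀) ^ (j i))
     ((m i : ℝ)))

theorem statement9 (n : ℕ) (hn : 1 ≤ n) (θ j : Fin n → ℝ)
    (hj : ∀ i, 0 < j i) (hsum : ∑ i, j i = 1) (hθ : ZLinIndep n θ)
    (m₀ : Fin n → ℤ) (hm₀ : IsBestApprox n j θ m₀) :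
    {m : Fin n → ℤ | IsBestApprox n j θ m ∧
        height n j m₀ ≤ height n j m ∧ height n j m < 2 * height n j m₀}.Finite ∧
      {m : Fin n → ℤ | IsBestApprox n j θ m ∧
        height n j m₀ ≤ height n j m ∧
          height n j m < 2 * height n j m₀}.ncard ≤ 4 * 3 ^ n := by
  haveI hnon : Nonempty (Fin n) := ⟨⟨0, hn⟩⟩
  classical
  set M₀ := height n j m₀ with hM₀def
  set S := {m : Fin n → ℤ | IsBestApprox n j θ m ∧
      M₀ ≤ height n j m ∧ height n j m < 2 * M₀} with hSdef
  -- weights are at most 1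
  have hj1 : ∀ i, j i ≤ 1 := by
    intro i
    calc j i ≤ ∑ i, j i := Finset.single_le_sum (fun i _ => (hj i).le) (Finset.mem_univ i)
      _ = 1 := hsum
  have hone_le : ∀ (m : Fin n → ℤ), m ≠ 0 → 1 ≤ height n j m := by
    intro m hm
    obtain ⟨i, hi⟩ := Function.ne_iff.mp hm
    have hi' : m i ≠ 0 := hi
    have h1 : (1 : ℝ) ≤ (|m i| : ℝ) := by
      have := Int.one_le_abs hi'
      exact_mod_cast this
    calc (1 : ℝ) ≤ (|m i| : ℝ) ^ (1 / j i) := Real.one_le_rpow h1 (one_div_nonneg.mpr (hj i).le)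
      _ ≤ _ := le_height' n j m i
  have hM₀1 : (1 : ℝ) ≤ M₀ := hone_le m₀ hm₀.1
  have hM₀pos : (0 : ℝ) < M₀ := by linarith
  -- the signed distance to the nearest integer
  set E : (Fin n → ℤ) → ℝ :=
    fun m => (∑ i, (m i : ℝ) * θ i) - round (∑ i, (m i : ℝ) * θ i) with hEdef
  have hEeq : ∀ m : Fin n → ℤ, E m =
      (∑ i, (m i : ℝ) * θ i) - round (∑ i, (m i : ℝ) * θ i) := by
    intro m; rw [hEdef]
  have hnear : ∀ m : Fin n → ℤ, nearInt (∑ i, (m i : ℝ) * θ i) = |E m| := by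
    intro m; rw [hEeq m]; rfl
  have hEne : ∀ m : Fin n → ℤ, m ≠ 0 → E m ≠ 0 := by
    intro m hm h0
    rw [hEeq m] at h0
    have h1 : (((-round (∑ i, (m i : ℝ) * θ i)) : ℤ) : ℝ) + ∑ i, (m i : ℝ) * θ i = 0 := by
      push_cast
      linarith
    exact hm (hθ _ m h1).2
  have hEhalf : ∀ m : Fin n → ℤ, |E m| < 1/2 := by
    intro m
    rcases lt_or_eq_of_le (abs_sub_round (∑ i, (m i : ℝ) * θ i)) with h | h
    · rw [hEeq m]; exact h
    · exfalso
      have hs2 : ∑ i, ((2 * m i : ℤ) : ℝ) * θ i = 2 * ∑ i, (m i : ℝ) * θ i := by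
        rw [Finset.mul_sum]
        apply Finset.sum_congr rfl
        intro i _
        push_cast
        ring
      rcases (abs_eq (by norm_num : (0:ℝ) ≤ 1/2)).mp h with h1 | h1
      · have h2 : (((-(2 * round (∑ i, (m i : ℝ) * θ i) + 1)) : ℤ) : ℝ) +
            ∑ i, ((2 * m i : ℤ) : ℝ) * θ i = 0 := by
          rw [hs2]; push_cast; linarith
        have := (hθ _ _ h2).1
        omega
      · have h2 : (((-(2 * round (∑ i, (m i : ℝ) * θ i) - 1)) : ℤ) : ℝ) +
            ∑ i, ((2 * m i : ℤ) : ℝ) * θ i = 0 := by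
          rw [hs2]; push_cast; linarith
        have := (hθ _ _ h2).1
        omega
  have hEneg : ∀ m : Fin n → ℤ, E (-m) = - E m := by
    intro m
    have hs : ∑ i, ((-m) i : ℝ) * θ i = -(∑ i, (m i : ℝ) * θ i) := by
      rw [← Finset.sum_neg_distrib]
      apply Finset.sum_congr rfl
      intro i _
      simp only [Pi.neg_apply]
      push_cast
      ring
    have hr := round_neg_of (x := ∑ i, (m i : ℝ) * θ i) (by
      have := hEhalf m; rw [hEeq m] at this; exact this)
    rw [hEeq (-m), hEeq m, hs, hr]
    push_cast
    ring
  -- sums of differences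
  have hsub : ∀ a b : Fin n → ℤ, ∑ i, (((a - b) i : ℤ) : ℝ) * θ i =
      (∑ i, (a i : ℝ) * θ i) - ∑ i, (b i : ℝ) * θ i := by
    intro a b
    rw [← Finset.sum_sub_distrib]
    apply Finset.sum_congr rfl
    intro i _
    push_cast [Pi.sub_apply]
    ring
  -- the radius used for a given vector
  set rad : (Fin n → ℤ) → ℝ :=
    fun m => if height n j m < 3/2 * M₀ then 3/2 * M₀ else 2 * M₀ with hraddef
  have hradlt : ∀ m ∈ S, height n j m < rad m := by
    intro m hm
    rw [hraddef]
    by_cases hb : height n j m < 3/2 * M₀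
    · simpa [hb] using hb
    · simpa [hb] using hm.2.2
  have hradkey : ∀ m ∈ S, ∀ i, 2/3 * (rad m) ^ (j i) ≤ (height n j m) ^ (j i) := by
    intro m hm i
    have hji := hj i
    have hji1 := hj1 i
    rw [hraddef]
    by_cases hb : height n j m < 3/2 * M₀
    · simp only [hb, if_true]
      have h32 : (3/2 : ℝ) ^ (j i) ≤ (3/2 : ℝ) := by
        calc (3/2 : ℝ) ^ (j i) ≤ (3/2 : ℝ) ^ (1 : ℝ) :=
              Real.rpow_le_rpow_of_exponent_le (by norm_num) hji1
          _ = 3/2 := Real.rpow_one _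
      have hM := Real.rpow_nonneg hM₀pos.le (j i)
      have hfin : M₀ ^ (j i) ≤ (height n j m) ^ (j i) :=
        Real.rpow_le_rpow hM₀pos.le hm.2.1 hji.le
      calc 2/3 * (3/2 * M₀) ^ (j i) = 2/3 * ((3/2 : ℝ) ^ (j i) * M₀ ^ (j i)) := by
            rw [Real.mul_rpow (by norm_num) hM₀pos.le]
        _ ≤ M₀ ^ (j i) := by nlinarith
        _ ≤ (height n j m) ^ (j i) := hfin
    · simp only [hb, if_false]
      have hge : 3/2 * M₀ ≤ height n j m := le_of_not_gt hb
      have h43 : (4/3 : ℝ) ^ (j i) ≤ (4/3 : ℝ) := by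
        calc (4/3 : ℝ) ^ (j i) ≤ (4/3 : ℝ) ^ (1 : ℝ) :=
              Real.rpow_le_rpow_of_exponent_le (by norm_num) hji1
          _ = 4/3 := Real.rpow_one _
      have hM : (0:ℝ) ≤ (3/2 * M₀) ^ (j i) := Real.rpow_nonneg (by linarith) (j i)
      have hfin : (3/2 * M₀) ^ (j i) ≤ (height n j m) ^ (j i) :=
        Real.rpow_le_rpow (by linarith) hge hji.le
      have h2 : (2 : ℝ) * M₀ = (4/3) * (3/2 * M₀) := by ring
      calc 2/3 * (2 * M₀) ^ (j i) = 2/3 * ((4/3 : ℝ) ^ (j i) * (3/2 * M₀) ^ (j i)) := by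
            rw [h2, Real.mul_rpow (by norm_num) (by linarith)]
        _ ≤ (3/2 * M₀) ^ (j i) := by nlinarith
        _ ≤ (height n j m) ^ (j i) := hfin
  -- the classifying function
  set Φ : (Fin n → ℤ) → Prop × Prop × (Fin n → Fin 3) :=
    fun m => (0 < E m, height n j m < 3/2 * M₀,
      fun i => thirdIdx ((rad m) ^ (j i)) ((m i : ℝ))) with hΦdef
  -- key step: within one class, heights determine the vector
  have key : ∀ m ∈ S, ∀ m' ∈ S, Φ m = Φ m' → height n j m ≤ height n j m' → m = m' := by
    intro m hmS m' hm'S hΦ hle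
    by_contra hne'
    have hm0 : m ≠ 0 := hmS.1.1
    have hm0' : m' ≠ 0 := hm'S.1.1
    have hmin := hmS.1.2
    have hmin' := hm'S.1.2
    have hge : M₀ ≤ height n j m := hmS.2.1
    have hlt : height n j m < 2 * M₀ := hmS.2.2
    have hge' : M₀ ≤ height n j m' := hm'S.2.1
    have hlt' : height n j m' < 2 * M₀ := hm'S.2.2
    rw [hΦdef, Prod.ext_iff, Prod.ext_iff] at hΦ
    have hsgniff : (0 < E m) ↔ (0 < E m') := iff_of_eq hΦ.1
    have hbk : (height n j m < 3/2 * M₀) = (height n j m' < 3/2 * M₀) := hΦ.2.1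
    have hradEq : rad m = rad m' := by rw [hraddef]; simp only [hbk]
    have h3 : ∀ i, thirdIdx ((rad m) ^ (j i)) ((m i : ℝ)) =
        thirdIdx ((rad m') ^ (j i)) ((m' i : ℝ)) := fun i => congrFun hΦ.2.2 i
    -- m ≠ -m'
    have hmnm' : m ≠ -m' := by
      intro hEq
      have hEm : E m = - E m' := by rw [hEq]; exact hEneg m'
      have hne'' := hEne m' hm0'
      rcases hne''.lt_or_gt with hlt0 | hgt0
      · have h4 := hsgniff.mp (by rw [hEm]; linarith)
        linarith
      · have h4 := hsgniff.mpr hgt0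
        rw [hEm] at h4
        linarith
    -- |E m'| < |E m|
    have hlt1 : |E m'| < |E m| := by
      have h5 := hmin' m hm0 hne' hmnm' hle
      rw [hnear m, hnear m'] at h5
      exact h5
    -- v = m' - m
    set v : Fin n → ℤ := m' - m with hvdef
    have hv0 : v ≠ 0 := sub_ne_zero.mpr (Ne.symm hne')
    have hrm : height n j m < rad m := hradlt m hmS
    have hrm' : height n j m' < rad m := hradEq ▸ hradlt m' hm'S
    have hco : ∀ i, (|v i| : ℝ) ≤ (height n j m) ^ (j i) := by
      intro i
      have hxm : |(m i : ℝ)| < (rad m) ^ (j i) := by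
        have := coord_lt n j hj m (rad m) i hrm
        push_cast at this ⊢
        exact this
      have hxm' : |(m' i : ℝ)| < (rad m) ^ (j i) := by
        have := coord_lt n j hj m' (rad m) i hrm'
        push_cast at this ⊢
        exact this
      have hdist := thirdIdx_dist hxm hxm' (by rw [h3 i, hradEq])
      have hvi : (|v i| : ℝ) = |(m i : ℝ) - (m' i : ℝ)| := by
        rw [hvdef]
        push_cast [Pi.sub_apply]
        rw [abs_sub_comm]
      rw [hvi]
      calc |(m i : ℝ) - (m' i : ℝ)| ≤ 2/3 * (rad m) ^ (j i) := hdist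
        _ ≤ (height n j m) ^ (j i) := hradkey m hmS i
    have hhv : height n j v ≤ height n j m :=
      height_le' n j hj v _ (by linarith) hco
    -- v ≠ m and v ≠ -m
    have hvm : v ≠ m := by
      intro hEq
      have hm'eq : ∀ i, m' i = m i + m i := by
        intro i
        have := congrFun hEq i
        simp only [hvdef, Pi.sub_apply] at this
        omega
      have h2h : ∀ i, 2 * ((|m i| : ℝ) ^ (1 / j i)) ≤ height n j m' := by
        intro i
        have e1 : (|m' i| : ℝ) = 2 * (|m i| : ℝ) := by
          rw [hm'eq i]
          push_cast
          rw [← two_mul, abs_mul]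
          simp
        have e2 : (|m' i| : ℝ) ^ (1 / j i) = (2:ℝ) ^ (1 / j i) * (|m i| : ℝ) ^ (1 / j i) := by
          rw [e1, Real.mul_rpow (by norm_num) (by positivity)]
        have e3 : (2 : ℝ) ≤ (2:ℝ) ^ (1 / j i) := by
          calc (2 : ℝ) = (2:ℝ) ^ (1 : ℝ) := (Real.rpow_one 2).symm
            _ ≤ (2:ℝ) ^ (1 / j i) := Real.rpow_le_rpow_of_exponent_le one_le_two
                (by rw [le_div_iff₀ (hj i)]; linarith [hj1 i])
        calc 2 * ((|m i| : ℝ) ^ (1 / j i)) ≤ (2:ℝ) ^ (1 / j i) * (|m i| : ℝ) ^ (1 / j i) :=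
              mul_le_mul_of_nonneg_right e3 (by positivity)
          _ = (|m' i| : ℝ) ^ (1 / j i) := e2.symm
          _ ≤ height n j m' := le_height' n j m' i
      have h4 : height n j m ≤ height n j m' / 2 :=
        ciSup_le (fun i => by linarith [h2h i])
      linarith
    have hvnm : v ≠ -m := by
      intro hEq
      apply hm0'
      funext i
      have := congrFun hEq i
      simp only [hvdef, Pi.sub_apply, Pi.neg_apply] at this
      simp only [Pi.zero_apply]
      omega
    have hmain := hmin v hv0 hvm hvnm hhv
    rw [hnear m] at hmain
    -- upper bound on nearInt of v
    have hub : nearInt (∑ i, (v i : ℝ) * θ i) ≤ |E m' - E m| := by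
      calc nearInt (∑ i, (v i : ℝ) * θ i)
          ≤ |(∑ i, (v i : ℝ) * θ i) -
              ((round (∑ i, (m' i : ℝ) * θ i) - round (∑ i, (m i : ℝ) * θ i) : ℤ) : ℝ)| :=
            nearInt_le _ _
        _ = |E m' - E m| := by
            rw [hvdef, hsub m' m, hEeq m, hEeq m']
            push_cast
            ring_nf
    -- conclude
    have hEmne := hEne m hm0
    have hEm'ne := hEne m' hm0'
    have habs : |E m' - E m| < |E m| := by
      rcases lt_or_gt_of_ne hEmne with hneg | hpos
    -- E m < 0
      · have hneg' : E m' < 0 := by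
          rcases lt_or_gt_of_ne hEm'ne with h' | h'
          · exact h'
          · exact absurd (hsgniff.mpr h') (by linarith)
        rw [abs_of_neg hneg, abs_of_neg hneg'] at hlt1
        rw [abs_of_neg hneg, abs_of_pos (by linarith : (0:ℝ) < E m' - E m)]
        linarith
      · have hpos' : 0 < E m' := hsgniff.mp hpos
        rw [abs_of_pos hpos, abs_of_pos hpos'] at hlt1
        rw [abs_of_pos hpos, abs_of_neg (by linarith : E m' - E m < 0)]
        linarith
    linarith
  -- injectivity
  have hinj : Set.InjOn Φ S := by
    intro m hm m' hm' hΦ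
    rcases le_total (height n j m) (height n j m') with h | h
    · exact key m hm m' hm' hΦ h
    · exact (key m' hm' m hm hΦ.symm h).symm
  constructor
  · exact Set.Finite.of_finite_image (Set.toFinite _) hinj
  · calc S.ncard = (Φ '' S).ncard := (Set.ncard_image_of_injOn hinj).symm
      _ ≤ (Set.univ : Set (Prop × Prop × (Fin n → Fin 3))).ncard :=
          Set.ncard_le_ncard (Set.subset_univ _) Set.finite_univ
      _ = Nat.card (Prop × Prop × (Fin n → Fin 3)) := Set.ncard_univ _
      _ = 4 * 3 ^ n := by
          simp [Nat.card_eq_fintype_card, Fintype.card_fun]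
          ring
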